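/- The average level of a node among all ordered trees with n edges is (1/2)√(πn) + O(1) as n → ∞. -/

import Mathlib

open Finset Filter Real Stirling Topology

/-- The total number of nodes at level ℓ among all ordered trees with n edges,
N(n,ℓ) = ((2ℓ+1)/(2n+1))·C(2n+1, n−ℓ). -/
noncomputable def Nlev (n ℓ : ℕ) : ℝ :=
  ((2 * ℓ + 1 : ℝ) / (2 * n + 1)) * Nat.choose (2 * n + 1) (n - ℓ)

lemma ratio_fact {n ℓ : ℕ} (h : ℓ < n) :
    ((n : ℝ) - ℓ) * ((2 * n + 1).choose (n - ℓ)) =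
      ((n : ℝ) + ℓ + 2) * ((2 * n + 1).choose (n - (ℓ + 1))) := by
  have h1 : n - ℓ = (n - (ℓ + 1)) + 1 := by omega
  have h2 := Nat.choose_succ_right_eq (2 * n + 1) (n - (ℓ + 1))
  rw [← h1] at h2
  have h3 : (2 * n + 1) - (n - (ℓ + 1)) = n + ℓ + 2 := by omega
  rw [h3] at h2
  have h4 : ((n : ℝ) - ℓ) = ((n - ℓ : ℕ) : ℝ) := by
    push_cast [Nat.cast_sub h.le]; ring
  rw [h4]
  have := congrArg (fun x : ℕ => (x : ℝ)) h2
  push_cast at this ⊢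
  linarith [this]

lemma sumA (n : ℕ) :
    ∑ ℓ ∈ range (n + 1), (2 * (ℓ : ℝ) + 1) * ((2 * n + 1).choose (n - ℓ)) =
      ((n : ℝ) + 1) * ((2 * n + 1).choose n) := by
  rw [Finset.sum_range_succ]
  have key : ∀ ℓ ∈ range n,
      (2 * (ℓ : ℝ) + 1) * ((2 * n + 1).choose (n - ℓ)) =
        (fun ℓ : ℕ => ((n : ℝ) + 1 + ℓ) * ((2 * n + 1).choose (n - ℓ))) ℓ
          - (fun ℓ : ℕ => ((n : ℝ) + 1 + ℓ) * ((2 * n + 1).choose (n - ℓ))) (ℓ + 1) := by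
    intro ℓ hℓ
    have h := ratio_fact (mem_range.mp hℓ)
    simp only
    push_cast
    linarith [h]
  rw [Finset.sum_congr rfl key, Finset.sum_range_sub']
  simp only [Nat.sub_self, Nat.choose_zero_right, Nat.sub_zero]
  push_cast
  ring

lemma sumD (n : ℕ) :
    ∑ ℓ ∈ range n, (((2 * n + 2).choose (n - ℓ) : ℝ)) =
      2 * 4 ^ n - ((2 * n + 1).choose n) - 1 := by
  have hrefl := Finset.sum_range_reflect (fun j : ℕ => (((2 * n + 2).choose (j + 1) : ℝ))) n
  have e1 : ∀ ℓ ∈ range n, (((2 * n + 2).choose (n - ℓ) : ℝ)) =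
      (fun j : ℕ => (((2 * n + 2).choose (j + 1) : ℝ))) (n - 1 - ℓ) := by
    intro ℓ hℓ
    have := mem_range.mp hℓ
    simp only
    congr 2
    omega
  rw [Finset.sum_congr rfl e1, hrefl]
  have e2 : ∀ j ∈ range n, (((2 * n + 2).choose (j + 1) : ℝ)) =
      ((2 * n + 1).choose (j + 1) : ℝ) + ((2 * n + 1).choose j : ℝ) := by
    intro j hj
    have : (2 * n + 2).choose (j + 1) = (2 * n + 1).choose j + (2 * n + 1).choose (j + 1) := by
      have := Nat.choose_succ_succ (2 * n + 1) j
      simpa [show 2 * n + 1 + 1 = 2 * n + 2 by ring] using this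
    rw [this]; push_cast; ring
  rw [Finset.sum_congr rfl e2, Finset.sum_add_distrib]
  have hh : (∑ i ∈ range (n + 1), (((2 * n + 1).choose i : ℝ))) = 4 ^ n := by
    have := Nat.sum_range_choose_halfway n
    have := congrArg (fun x : ℕ => (x : ℝ)) this
    push_cast at this
    convert this using 2
  have t1 : ∑ j ∈ range n, (((2 * n + 1).choose (j + 1) : ℝ)) =
      (∑ i ∈ range (n + 1), (((2 * n + 1).choose i : ℝ))) - 1 := by
    rw [Finset.sum_range_succ' (fun i => (((2 * n + 1).choose i : ℝ))) n]
    simp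
  have t2 : ∑ j ∈ range n, (((2 * n + 1).choose j : ℝ)) =
      (∑ i ∈ range (n + 1), (((2 * n + 1).choose i : ℝ))) - ((2 * n + 1).choose n) := by
    rw [Finset.sum_range_succ]; ring
  rw [t1, t2, hh]; ring

lemma sumB (n : ℕ) :
    ∑ ℓ ∈ range (n + 1), (2 * (ℓ : ℝ) + 1) ^ 2 * ((2 * n + 1).choose (n - ℓ)) =
      (2 * (n : ℝ) + 1) * 4 ^ n := by
  rw [Finset.sum_range_succ]
  set h : ℕ → ℝ := fun ℓ =>
    (2 * (ℓ : ℝ) ^ 2 + (2 * n + 2) * ℓ + n + 1 / 2) * ((2 * n + 1).choose (n - ℓ)) with hh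
  have key : ∀ ℓ ∈ range n,
      (2 * (ℓ : ℝ) + 1) ^ 2 * ((2 * n + 1).choose (n - ℓ)) =
        (h ℓ - h (ℓ + 1)) + (2 * (n : ℝ) + 1) / 2 * ((2 * n + 2).choose (n - ℓ)) := by
    intro ℓ hℓ
    have hl := mem_range.mp hℓ
    have hr := ratio_fact hl
    have pas : ((2 * n + 2).choose (n - ℓ) : ℝ) =
        ((2 * n + 1).choose (n - ℓ) : ℝ) + ((2 * n + 1).choose (n - (ℓ + 1)) : ℝ) := by
      have h1 : n - ℓ = (n - (ℓ + 1)) + 1 := by omega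
      have h5 : (2 * n + 1 + 1).choose ((n - (ℓ + 1)) + 1)
          = (2 * n + 1).choose (n - (ℓ + 1)) + (2 * n + 1).choose ((n - (ℓ + 1)) + 1) :=
        Nat.choose_succ_succ' (2 * n + 1) (n - (ℓ + 1))
      rw [← h1, show 2 * n + 1 + 1 = 2 * n + 2 from rfl] at h5
      rw [h5]
      push_cast; ring
    rw [pas, hh]
    simp only
    push_cast
    nlinarith [hr]
  rw [Finset.sum_congr rfl key, Finset.sum_add_distrib, Finset.sum_range_sub',
    ← Finset.mul_sum, sumD n]
  simp only [hh, Nat.sub_self, Nat.sub_zero, Nat.choose_zero_right]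
  push_cast
  ring

lemma cn_id (n : ℕ) :
    ((n : ℝ) + 1) * ((2 * n + 1).choose n) = (2 * (n : ℝ) + 1) * ((2 * n).choose n) := by
  have h1 := Nat.add_one_mul_choose_eq (2 * n) n
  have h2 : (2 * n + 1).choose (n + 1) = (2 * n + 1).choose n := Nat.choose_symm_half n
  rw [h2] at h1
  have := congrArg (fun x : ℕ => (x : ℝ)) h1
  push_cast at this
  linarith [this]

/-- The average level of a node among all ordered trees with n edges. -/
noncomputable def avgLevel (n : ℕ) : ℝ :=
  (∑ ℓ ∈ Finset.range (n + 1), (ℓ : ℝ) * Nlev n ℓ) /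
    (∑ ℓ ∈ Finset.range (n + 1), Nlev n ℓ)

lemma sum_Nlev (n : ℕ) :
    ∑ ℓ ∈ range (n + 1), Nlev n ℓ = ((2 * n).choose n : ℝ) := by
  have h2n : (2 * (n : ℝ) + 1) ≠ 0 := by positivity
  have : ∑ ℓ ∈ range (n + 1), Nlev n ℓ =
      (∑ ℓ ∈ range (n + 1), (2 * (ℓ : ℝ) + 1) * ((2 * n + 1).choose (n - ℓ))) / (2 * n + 1) := by
    rw [Finset.sum_div]
    refine Finset.sum_congr rfl fun ℓ _ => ?_
    unfold Nlev
    field_simp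
  rw [this, sumA, cn_id]
  field_simp

lemma sum_mul_Nlev (n : ℕ) :
    ∑ ℓ ∈ range (n + 1), (ℓ : ℝ) * Nlev n ℓ = (4 ^ n - ((2 * n).choose n : ℝ)) / 2 := by
  have h2n : (2 * (n : ℝ) + 1) ≠ 0 := by positivity
  have e : ∀ ℓ ∈ range (n + 1), (ℓ : ℝ) * Nlev n ℓ =
      ((2 * (ℓ : ℝ) + 1) ^ 2 * ((2 * n + 1).choose (n - ℓ))
        - (2 * (ℓ : ℝ) + 1) * ((2 * n + 1).choose (n - ℓ))) / (2 * (2 * (n : ℝ) + 1)) := by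
    intro ℓ _
    unfold Nlev
    field_simp
    ring
  rw [Finset.sum_congr rfl e, ← Finset.sum_div, Finset.sum_sub_distrib, sumA, sumB, cn_id]
  field_simp

lemma cb_pos (n : ℕ) : (0 : ℝ) < ((2 * n).choose n : ℝ) := by
  exact_mod_cast Nat.choose_pos (by omega : n ≤ 2 * n)

lemma avgLevel_eq (n : ℕ) :
    avgLevel n = 4 ^ n / (2 * ((2 * n).choose n : ℝ)) - 1 / 2 := by
  have hc : (0 : ℝ) < ((2 * n).choose n : ℝ) := cb_pos n
  unfold avgLevel
  rw [sum_Nlev, sum_mul_Nlev]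
  field_simp

noncomputable def aseq (n : ℕ) : ℝ := ((2 * n).choose n : ℝ) * Real.sqrt n / 4 ^ n
noncomputable def bseq (n : ℕ) : ℝ := ((2 * n).choose n : ℝ) * Real.sqrt (n + 1 / 2) / 4 ^ n

lemma le_of_sq (a b : ℝ) (hb : 0 ≤ b) (h : a ^ 2 ≤ b ^ 2) (ha : 0 ≤ a) : a ≤ b := by
  nlinarith

lemma cb_rec (n : ℕ) :
    ((n : ℝ) + 1) * ((2 * (n + 1)).choose (n + 1)) = 2 * (2 * n + 1) * ((2 * n).choose n) := by
  have h := Nat.succ_mul_centralBinom_succ n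
  have := congrArg (fun x : ℕ => (x : ℝ)) h
  simp only [Nat.centralBinom] at this
  push_cast at this
  linarith [this]

lemma aseq_mono : Monotone aseq := by
  apply monotone_nat_of_le_succ
  intro n
  unfold aseq
  have hrel : ((n : ℝ) + 1) * ((2 * (n + 1)).choose (n + 1) : ℝ)
      = 2 * (2 * n + 1) * ((2 * n).choose n : ℝ) := cb_rec n
  set c1 : ℝ := ((2 * n).choose n : ℝ)
  set c2 : ℝ := ((2 * (n + 1)).choose (n + 1) : ℝ)
  have hc1p : (0 : ℝ) < c1 := cb_pos n
  have hc2p : (0 : ℝ) < c2 := cb_pos (n + 1)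
  have h4 : (0 : ℝ) < 4 ^ n := by positivity
  have hx : Real.sqrt n ^ 2 = (n : ℝ) := Real.sq_sqrt (by positivity)
  have hy : Real.sqrt ((n : ℕ) + 1 : ℕ) ^ 2 = (n : ℝ) + 1 := by
    push_cast; exact Real.sq_sqrt (by positivity)
  have hxn : (0 : ℝ) ≤ Real.sqrt n := Real.sqrt_nonneg _
  have hyn : (0 : ℝ) ≤ Real.sqrt ((n : ℕ) + 1 : ℕ) := Real.sqrt_nonneg _
  have hn2 : (0 : ℝ) < ((n : ℝ) + 1) ^ 2 := by positivity
  rw [div_le_div_iff₀ h4 (by positivity)]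
  have hsq : c2 ^ 2 * ((n : ℝ) + 1) ^ 2 = 4 * (2 * n + 1) ^ 2 * c1 ^ 2 := by
    linear_combination (((n : ℝ) + 1) * c2 + 2 * (2 * n + 1) * c1) * hrel
  have e2 : 16 * c1 ^ 2 * (n : ℝ) * ((n : ℝ) + 1) ^ 2
      ≤ 4 * (2 * n + 1) ^ 2 * c1 ^ 2 * ((n : ℝ) + 1) := by
    nlinarith [sq_nonneg c1, Nat.cast_nonneg (α := ℝ) n]
  have key2 : (4 * c1) ^ 2 * (n : ℝ) ≤ c2 ^ 2 * ((n : ℝ) + 1) := by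
    nlinarith [hsq, e2, hn2]
  have key : 4 * c1 * Real.sqrt n ≤ c2 * Real.sqrt ((n : ℕ) + 1 : ℕ) := by
    apply le_of_sq _ _ (by positivity) _ (by positivity)
    calc (4 * c1 * Real.sqrt n) ^ 2 = (4 * c1) ^ 2 * Real.sqrt n ^ 2 := by ring
      _ = (4 * c1) ^ 2 * (n : ℝ) := by rw [hx]
      _ ≤ c2 ^ 2 * ((n : ℝ) + 1) := key2
      _ = c2 ^ 2 * Real.sqrt ((n : ℕ) + 1 : ℕ) ^ 2 := by rw [hy]
      _ = (c2 * Real.sqrt ((n : ℕ) + 1 : ℕ)) ^ 2 := by ring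
  calc c1 * Real.sqrt n * 4 ^ (n + 1) = (4 * c1 * Real.sqrt n) * 4 ^ n := by ring
    _ ≤ (c2 * Real.sqrt ((n : ℕ) + 1 : ℕ)) * 4 ^ n :=
        mul_le_mul_of_nonneg_right key h4.le
    _ = c2 * Real.sqrt ((n : ℕ) + 1 : ℕ) * 4 ^ n := by ring

lemma bseq_anti : Antitone bseq := by
  apply antitone_nat_of_succ_le
  intro n
  unfold bseq
  have hrel : ((n : ℝ) + 1) * ((2 * (n + 1)).choose (n + 1) : ℝ)
      = 2 * (2 * n + 1) * ((2 * n).choose n : ℝ) := cb_rec n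
  set c1 : ℝ := ((2 * n).choose n : ℝ)
  set c2 : ℝ := ((2 * (n + 1)).choose (n + 1) : ℝ)
  have hc1p : (0 : ℝ) < c1 := cb_pos n
  have hc2p : (0 : ℝ) < c2 := cb_pos (n + 1)
  have h4 : (0 : ℝ) < 4 ^ n := by positivity
  have hx : Real.sqrt ((n : ℝ) + 1 / 2) ^ 2 = (n : ℝ) + 1 / 2 := Real.sq_sqrt (by positivity)
  have hy : Real.sqrt (((n : ℕ) + 1 : ℕ) + 1 / 2) ^ 2 = (n : ℝ) + 1 + 1 / 2 := by
    push_cast; exact Real.sq_sqrt (by positivity)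
  have hxn : (0 : ℝ) ≤ Real.sqrt ((n : ℝ) + 1 / 2) := Real.sqrt_nonneg _
  have hyn : (0 : ℝ) ≤ Real.sqrt (((n : ℕ) + 1 : ℕ) + 1 / 2) := Real.sqrt_nonneg _
  have hn2 : (0 : ℝ) < ((n : ℝ) + 1) ^ 2 := by positivity
  rw [div_le_div_iff₀ (by positivity) h4]
  have hsq : c2 ^ 2 * ((n : ℝ) + 1) ^ 2 = 4 * (2 * n + 1) ^ 2 * c1 ^ 2 := by
    linear_combination (((n : ℝ) + 1) * c2 + 2 * (2 * n + 1) * c1) * hrel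
  have e2 : 4 * (2 * n + 1) ^ 2 * c1 ^ 2 * ((n : ℝ) + 1 + 1 / 2)
      ≤ 16 * c1 ^ 2 * ((n : ℝ) + 1 / 2) * ((n : ℝ) + 1) ^ 2 := by
    nlinarith [sq_nonneg c1, Nat.cast_nonneg (α := ℝ) n]
  have key2 : c2 ^ 2 * ((n : ℝ) + 1 + 1 / 2) ≤ (4 * c1) ^ 2 * ((n : ℝ) + 1 / 2) := by
    nlinarith [hsq, e2, hn2]
  have key : c2 * Real.sqrt (((n : ℕ) + 1 : ℕ) + 1 / 2)
      ≤ 4 * c1 * Real.sqrt ((n : ℝ) + 1 / 2) := by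
    apply le_of_sq _ _ (by positivity) _ (by positivity)
    calc (c2 * Real.sqrt (((n : ℕ) + 1 : ℕ) + 1 / 2)) ^ 2
        = c2 ^ 2 * Real.sqrt (((n : ℕ) + 1 : ℕ) + 1 / 2) ^ 2 := by ring
      _ = c2 ^ 2 * ((n : ℝ) + 1 + 1 / 2) := by rw [hy]
      _ ≤ (4 * c1) ^ 2 * ((n : ℝ) + 1 / 2) := key2
      _ = (4 * c1) ^ 2 * Real.sqrt ((n : ℝ) + 1 / 2) ^ 2 := by rw [hx]
      _ = (4 * c1 * Real.sqrt ((n : ℝ) + 1 / 2)) ^ 2 := by ring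
  calc c2 * Real.sqrt (((n : ℕ) + 1 : ℕ) + 1 / 2) * 4 ^ n
      ≤ (4 * c1 * Real.sqrt ((n : ℝ) + 1 / 2)) * 4 ^ n :=
        mul_le_mul_of_nonneg_right key h4.le
    _ = c1 * Real.sqrt ((n : ℝ) + 1 / 2) * 4 ^ (n + 1) := by ring

lemma aseq_eq (n : ℕ) (hn : 1 ≤ n) :
    aseq n = stirlingSeq (2 * n) / stirlingSeq n ^ 2 := by
  have hn' : (0 : ℝ) < n := by exact_mod_cast hn
  have hE : (0 : ℝ) < Real.exp 1 := Real.exp_pos 1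
  have hF : (0 : ℝ) < (Nat.factorial n : ℝ) := by exact_mod_cast n.factorial_pos
  have hcb : ((2 * n).choose n : ℝ) * (Nat.factorial n : ℝ) * (Nat.factorial n : ℝ)
      = (Nat.factorial (2 * n) : ℝ) := by
    have h := Nat.choose_mul_factorial_mul_factorial (show n ≤ 2 * n by omega)
    rw [show 2 * n - n = n by omega] at h
    exact_mod_cast congrArg (fun x : ℕ => (x : ℝ)) h
  have hxpos : (0 : ℝ) < Real.sqrt n := Real.sqrt_pos.mpr hn'
  have hx2 : Real.sqrt n ^ 2 = (n : ℝ) := Real.sq_sqrt hn'.le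
  have hP : (0 : ℝ) < ((n : ℝ) / Real.exp 1) ^ n := by positivity
  have hSpos : (0 : ℝ) < Real.sqrt (2 * (n : ℝ)) := Real.sqrt_pos.mpr (by positivity)
  have hS2 : Real.sqrt (2 * (n : ℝ)) ^ 2 = 2 * (n : ℝ) := Real.sq_sqrt (by positivity)
  have h2n : Real.sqrt (2 * ((2 * n : ℕ) : ℝ)) = 2 * Real.sqrt n := by
    push_cast
    rw [show (2 : ℝ) * (2 * n) = (2 * Real.sqrt n) ^ 2 by rw [mul_pow, hx2]; ring]
    exact Real.sqrt_sq (by positivity)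
  have hpow : (((2 * n : ℕ) : ℝ) / Real.exp 1) ^ (2 * n)
      = 4 ^ n * (((n : ℝ) / Real.exp 1) ^ n) ^ 2 := by
    push_cast
    rw [pow_mul, show ((2 * (n : ℝ)) / Real.exp 1) ^ 2 = 4 * ((n : ℝ) / Real.exp 1) ^ 2 by
      field_simp; ring, mul_pow]
    ring
  unfold aseq stirlingSeq
  rw [h2n, hpow, ← hcb]
  field_simp
  ring_nf
  rw [hx2, Real.sq_sqrt (show (0:ℝ) ≤ (n:ℝ) * 2 by positivity)]
  ring

lemma aseq_tendsto : Tendsto aseq atTop (𝓝 (1 / Real.sqrt π)) := by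
  have hπ : (0 : ℝ) < Real.sqrt π := Real.sqrt_pos.mpr Real.pi_pos
  have h2 : Tendsto (fun n : ℕ => stirlingSeq (2 * n)) atTop (𝓝 (Real.sqrt π)) :=
    tendsto_stirlingSeq_sqrt_pi.comp
      (tendsto_atTop_mono (fun n => by omega : ∀ n : ℕ, n ≤ 2 * n) tendsto_id)
  have h1 : Tendsto (fun n : ℕ => stirlingSeq n ^ 2) atTop (𝓝 (Real.sqrt π ^ 2)) :=
    tendsto_stirlingSeq_sqrt_pi.pow 2
  have hd : Tendsto (fun n : ℕ => stirlingSeq (2 * n) / stirlingSeq n ^ 2) atTop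
      (𝓝 (Real.sqrt π / Real.sqrt π ^ 2)) := h2.div h1 (by positivity)
  have he : Real.sqrt π / Real.sqrt π ^ 2 = 1 / Real.sqrt π := by
    field_simp
  rw [he] at hd
  apply hd.congr'
  filter_upwards [eventually_ge_atTop 1] with n hn
  exact (aseq_eq n hn).symm

lemma bseq_tendsto : Tendsto bseq atTop (𝓝 (1 / Real.sqrt π)) := by
  have hratio : Tendsto (fun n : ℕ => Real.sqrt (((n : ℝ) + 1 / 2) / n)) atTop (𝓝 1) := by
    have hg : Tendsto (fun n : ℕ => ((n : ℝ) + 1 / 2) / n) atTop (𝓝 1) := by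
      have h0 : Tendsto (fun n : ℕ => (1 : ℝ) / n) atTop (𝓝 0) :=
        tendsto_one_div_atTop_nhds_zero_nat
      have : Tendsto (fun n : ℕ => 1 + (1 / 2) * (1 / (n : ℝ))) atTop (𝓝 (1 + (1 / 2) * 0)) :=
        tendsto_const_nhds.add (h0.const_mul _)
      rw [show (1 : ℝ) + (1 / 2) * 0 = 1 by norm_num] at this
      apply this.congr'
      filter_upwards [eventually_ge_atTop 1] with n hn
      have hn' : (0 : ℝ) < n := by exact_mod_cast hn
      field_simp
    have h1' := (Real.continuous_sqrt.tendsto 1).comp hg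
    rw [Real.sqrt_one] at h1'
    exact h1'
  have hmul := aseq_tendsto.mul hratio
  rw [mul_one] at hmul
  apply hmul.congr'
  filter_upwards [eventually_ge_atTop 1] with n hn
  have hn' : (0 : ℝ) < n := by exact_mod_cast hn
  have hxpos : (0 : ℝ) < Real.sqrt n := Real.sqrt_pos.mpr hn'
  rw [Real.sqrt_div (by positivity : (0 : ℝ) ≤ (n : ℝ) + 1 / 2)]
  unfold aseq bseq
  field_simp

theorem avgLevel_asymptotic :
    Asymptotics.IsBigO Filter.atTop
      (fun n : ℕ => avgLevel n - (1 / 2) * Real.sqrt (Real.pi * n))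
      (fun _ : ℕ => (1 : ℝ)) := by
  rw [Asymptotics.isBigO_iff]
  refine ⟨1, ?_⟩
  filter_upwards [eventually_ge_atTop 1] with n hn
  have hn' : (0 : ℝ) < n := by exact_mod_cast hn
  have hn1 : (1 : ℝ) ≤ n := by exact_mod_cast hn
  have hc := cb_pos n
  have hπ := Real.pi_pos
  have hps : (0 : ℝ) < Real.sqrt π := Real.sqrt_pos.mpr hπ
  have hb1 : (1 : ℝ) ≤ Real.sqrt n := by
    rw [show (1 : ℝ) = Real.sqrt 1 by rw [Real.sqrt_one]]
    exact Real.sqrt_le_sqrt hn1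
  have hp2 : Real.sqrt π ≤ 2 := by
    rw [show (2 : ℝ) = Real.sqrt 4 by
      rw [show (4 : ℝ) = 2 ^ 2 by norm_num, Real.sqrt_sq (by norm_num)]]
    exact Real.sqrt_le_sqrt Real.pi_le_four
  have ha2 : Real.sqrt ((n : ℝ) + 1 / 2) ^ 2 = (n : ℝ) + 1 / 2 := Real.sq_sqrt (by positivity)
  have hb2 : Real.sqrt (n : ℝ) ^ 2 = (n : ℝ) := Real.sq_sqrt hn'.le
  have han : (0 : ℝ) ≤ Real.sqrt ((n : ℝ) + 1 / 2) := Real.sqrt_nonneg _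
  have hA : aseq n ≤ 1 / Real.sqrt π := aseq_mono.ge_of_tendsto aseq_tendsto n
  have hB : 1 / Real.sqrt π ≤ bseq n := bseq_anti.le_of_tendsto bseq_tendsto n
  have h4 : (0 : ℝ) < 4 ^ n := by positivity
  have lower : Real.sqrt π * Real.sqrt n * ((2 * n).choose n : ℝ) ≤ 4 ^ n := by
    unfold aseq at hA
    rw [div_le_div_iff₀ h4 hps] at hA
    nlinarith [hA]
  have upper : 4 ^ n ≤ Real.sqrt π * Real.sqrt ((n : ℝ) + 1 / 2) * ((2 * n).choose n : ℝ) := by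
    unfold bseq at hB
    rw [div_le_div_iff₀ hps h4] at hB
    nlinarith [hB]
  have hsm : Real.sqrt (π * n) = Real.sqrt π * Real.sqrt n := Real.sqrt_mul hπ.le n
  have gap : Real.sqrt π * (Real.sqrt ((n : ℝ) + 1 / 2) - Real.sqrt n) ≤ 1 := by
    have hge : Real.sqrt (n : ℝ) ≤ Real.sqrt ((n : ℝ) + 1 / 2) :=
      Real.sqrt_le_sqrt (by linarith)
    nlinarith [ha2, hb2, hb1, hp2, hge, hps.le]
  rw [Real.norm_eq_abs, norm_one, mul_one, avgLevel_eq, abs_le]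
  constructor
  · have hlow : Real.sqrt π * Real.sqrt n / 2 ≤ 4 ^ n / (2 * ((2 * n).choose n : ℝ)) := by
      rw [le_div_iff₀ (by positivity)]
      nlinarith [lower]
    rw [hsm]
    linarith
  · have hupper' : 4 ^ n / (2 * ((2 * n).choose n : ℝ))
        ≤ Real.sqrt π * Real.sqrt ((n : ℝ) + 1 / 2) / 2 := by
      rw [div_le_div_iff₀ (by positivity) (by norm_num)]
      nlinarith [upper, hc]
    rw [hsm]
    linarith [hupper', gap]
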